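/- arXiv:2201.00342 — 4 statements merged into one kernel-verified Lean document; each statement's English description precedes it below -/
import Mathlib

section
/- If η is a complex number with |η| ≤ 2^{-d} for some natural number d ≥ 1, then (1+η)^{-1} can be written as (1+ξ₁)(1+ξ₂) with |ξ₁|, |ξ₂| ≤ 2^{-d}. Equivalently, there exists ξ with |ξ| ≤ 2^{-d} and (1+ξ)² = (1+η)^{-1}. -/
/-- A factor `(1+η)⁻¹` with `‖η‖ ≤ 2^(-d)`, `d ≥ 1`, can be written as
`(1+ξ)²` with `‖ξ‖ ≤ 2^(-d)`. -/
theorem stmt2 (d : ℕ) (hd : 1 ≤ d) (η : ℂ) (hη : ‖η‖ ≤ (2:ℝ) ^ (-(d:ℤ))) :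
    ∃ ξ : ℂ, ‖ξ‖ ≤ (2:ℝ) ^ (-(d:ℤ)) ∧ (1 + ξ) ^ 2 = (1 + η)⁻¹ := by
  set B : ℝ := (2:ℝ) ^ (-(d:ℤ)) with hBdef
  have hB : B ≤ 1/2 := by
    rw [hBdef]
    calc (2:ℝ) ^ (-(d:ℤ)) ≤ (2:ℝ) ^ (-(1:ℤ)) := by
          apply zpow_le_zpow_right₀ (by norm_num : (1:ℝ) ≤ 2); omega
      _ = 1/2 := by norm_num
  have ht : ‖η‖ ≤ 1/2 := hη.trans hB
  have ht0 : (0:ℝ) ≤ ‖η‖ := norm_nonneg _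
  have ht1 : ‖η‖ < 1 := by linarith
  have h0 : (1 + η) ≠ 0 := by
    intro h
    have : ‖η‖ = 1 := by
      have : η = -1 := by linear_combination h
      simp [this]
    linarith
  set z : ℂ := -(1/2 : ℂ) * Complex.log (1 + η) with hzdef
  refine ⟨Complex.exp z - 1, ?_, ?_⟩
  · -- norm bound
    have hlog : ‖Complex.log (1 + η)‖ ≤ ‖η‖ ^ 2 * (1 - ‖η‖)⁻¹ / 2 + ‖η‖ :=
      Complex.norm_log_one_add_le ht1
    have hinv : (1 - ‖η‖)⁻¹ ≤ 2 := by
      rw [inv_le_comm₀ (by linarith) (by norm_num)]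
      linarith
    have hlog' : ‖Complex.log (1 + η)‖ ≤ ‖η‖ ^ 2 + ‖η‖ := by
      have : ‖η‖ ^ 2 * (1 - ‖η‖)⁻¹ / 2 ≤ ‖η‖ ^ 2 := by
        nlinarith [sq_nonneg ‖η‖]
      linarith
    have hz : ‖z‖ = ‖Complex.log (1 + η)‖ / 2 := by
      rw [hzdef, norm_mul]
      norm_num
      ring
    have hu0 : (0:ℝ) ≤ ‖z‖ := norm_nonneg _
    have hu : ‖z‖ ≤ (‖η‖ ^ 2 + ‖η‖) / 2 := by rw [hz]; linarith
    have hu1 : ‖z‖ ≤ 1 := by nlinarith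
    have hexp := Complex.exp_bound (x := z) (by simpa using hu1) (n := 3) (by norm_num)
    have hsum : ∑ m ∈ Finset.range 3, z ^ m / (m.factorial : ℂ) = 1 + z + z ^ 2 / 2 := by
      simp [Finset.sum_range_succ, Nat.factorial]
    rw [hsum] at hexp
    have habs : ‖Complex.exp z - (1 + z + z ^ 2 / 2)‖ ≤ ‖z‖ ^ 3 * (2/9) := by
      calc ‖Complex.exp z - (1 + z + z ^ 2 / 2)‖
          ≤ ‖z‖ ^ 3 * ((Nat.succ 3 : ℝ) * ((Nat.factorial 3 : ℝ) * 3)⁻¹) := hexp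
        _ = ‖z‖ ^ 3 * (2/9) := by norm_num [Nat.factorial]
        _ = ‖z‖ ^ 3 * (2/9) := rfl
    have h1 : ‖Complex.exp z - 1‖ ≤ ‖Complex.exp z - (1 + z + z ^ 2 / 2)‖ + ‖z + z ^ 2 / 2‖ := by
      have : Complex.exp z - 1 = (Complex.exp z - (1 + z + z ^ 2 / 2)) + (z + z ^ 2 / 2) := by ring
      rw [this]; exact norm_add_le _ _
    have h2 : ‖z + z ^ 2 / 2‖ ≤ ‖z‖ + ‖z‖ ^ 2 / 2 := by
      refine (norm_add_le _ _).trans ?_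
      have : ‖z ^ 2 / 2‖ = ‖z‖ ^ 2 / 2 := by
        rw [norm_div, norm_pow]
        norm_num
      rw [this]
    have hfin : ‖Complex.exp z - 1‖ ≤ ‖z‖ + ‖z‖ ^ 2 / 2 + ‖z‖ ^ 3 * (2/9) := by linarith
    have : ‖z‖ + ‖z‖ ^ 2 / 2 + ‖z‖ ^ 3 * (2/9) ≤ ‖η‖ := by
      nlinarith [sq_nonneg ‖z‖, sq_nonneg ‖η‖, pow_le_pow_left₀ hu0 hu 3,
        pow_le_pow_left₀ hu0 hu 2, sq_nonneg (‖z‖ - ‖η‖), sq_nonneg (1 - ‖η‖)]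
    exact le_trans (hfin.trans this) hη
  · -- square identity
    have : (1 + (Complex.exp z - 1)) ^ 2 = Complex.exp (z + z) := by
      rw [Complex.exp_add]; ring
    rw [this, hzdef]
    have : -(1/2 : ℂ) * Complex.log (1 + η) + -(1/2 : ℂ) * Complex.log (1 + η)
        = -Complex.log (1 + η) := by ring
    rw [this, Complex.exp_neg, Complex.exp_log h0]
end

section
/- Let a = x+iy and b = u+iv be complex numbers and suppose the complex product is computed as a⊗b = {x(u+iv)(1+δ)}⊕{y(-v+iu)(1+ξ)} where |δ|, |ξ| ≤ 2^{-d} (complex) and the outer addition introduces a factor (1+η₀) with |η₀| ≤ 2^{-d}. Then a⊗b = ab(1+η₁)(1+η₂)(1+η₃) for complex η_j with |η_j| ≤ 2^{-d}; in particular |a⊗b − ab| ≤ |ab|((1+2^{-d})³ − 1). -/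
set_option maxHeartbeats 1000000

lemma sqrt_pert (lam : ℂ) (ε : ℝ) (hε0 : 0 < ε) (hε : ε ≤ 1/2)
    (hlam : ‖lam‖ ≤ Real.sqrt 2 * ε) :
    ∃ μ : ℂ, ‖μ‖ ≤ ε ∧ (1 + μ)^2 = 1 + lam := by
  have hs2 : Real.sqrt 2 ≤ 1.5 := by
    rw [show (1.5:ℝ) = Real.sqrt (1.5^2) from (Real.sqrt_sq (by norm_num)).symm]
    exact Real.sqrt_le_sqrt (by norm_num)
  set t := ‖lam‖ with htdef
  have ht0 : 0 ≤ t := norm_nonneg _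
  have ht1 : t ≤ 2*ε - ε^2 := by nlinarith
  have ht2 : t ≤ 3/4 := by nlinarith
  -- get a square root of 1 + lam
  have hw0 : (1 : ℂ) + lam ≠ 0 := by
    intro h
    have : ‖lam‖ = 1 := by
      have : lam = -1 := by linear_combination h
      simp [this]
    nlinarith
  obtain ⟨s0, hs0⟩ : ∃ s : ℂ, s^2 = 1 + lam :=
    ⟨(1+lam) ^ ((2:ℕ)⁻¹ : ℂ), by
      simpa using Complex.cpow_nat_inv_pow (1+lam) (two_ne_zero)⟩
  set s : ℂ := if 0 ≤ s0.re then s0 else -s0 with hsdef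
  have hs : s^2 = 1 + lam := by
    by_cases h : 0 ≤ s0.re <;> simp [hsdef, h, hs0]
  have hsre : 0 ≤ s.re := by
    by_cases h : 0 ≤ s0.re <;> simp [hsdef, h] <;> linarith
  refine ⟨s - 1, ?_, by rw [← hs]; ring⟩
  have hwnorm : 1 - t ≤ ‖(1:ℂ) + lam‖ := by
    have h := norm_sub_norm_le (1:ℂ) (-lam)
    rw [sub_neg_eq_add, norm_neg, norm_one] at h
    linarith
  have hwre : 1 - t ≤ ((1:ℂ) + lam).re := by
    have := Complex.abs_re_le_norm lam
    have := abs_le.mp this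
    simp only [Complex.add_re, Complex.one_re]; linarith [this.1]
  have hnorms : ‖(1:ℂ)+lam‖ = s.re^2 + s.im^2 := by
    rw [← hs, norm_pow, Complex.sq_norm, Complex.normSq_apply]
    ring
  have hre2 : ((1:ℂ)+lam).re = s.re^2 - s.im^2 := by
    rw [← hs]; simp [pow_two, Complex.mul_re]; try ring
  have hsre2 : 1 - t ≤ s.re^2 := by nlinarith
  have hsrege : Real.sqrt (1-t) ≤ s.re := by
    have h1 : Real.sqrt (1-t) ≤ Real.sqrt (s.re^2) := Real.sqrt_le_sqrt hsre2
    rwa [Real.sqrt_sq hsre] at h1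
  have hsq1mt : (1:ℝ) - ε ≤ Real.sqrt (1-t) := by
    have h1 : ((1:ℝ)-ε)^2 ≤ 1 - t := by nlinarith
    have h2 : Real.sqrt (((1:ℝ)-ε)^2) ≤ Real.sqrt (1-t) := Real.sqrt_le_sqrt h1
    rwa [Real.sqrt_sq (by linarith)] at h2
  have hsp1 : (1:ℝ) + Real.sqrt (1-t) ≤ ‖s + 1‖ := by
    have h1 : ‖s+1‖^2 = (s.re+1)^2 + s.im^2 := by
      rw [Complex.sq_norm, Complex.normSq_apply]
      simp
      ring
    have h2 : (1 + Real.sqrt (1-t))^2 ≤ ‖s+1‖^2 := by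
      have := Real.sq_sqrt (by linarith : (0:ℝ) ≤ 1 - t)
      nlinarith
    nlinarith [norm_nonneg (s+1), Real.sqrt_nonneg (1-t)]
  have hprod : ‖s - 1‖ * ‖s + 1‖ = t := by
    rw [← norm_mul]
    have : (s-1)*(s+1) = lam := by linear_combination hs
    rw [this]
  have h2e : (0:ℝ) < 2 - ε := by linarith
  have hA : 2 - ε ≤ ‖s+1‖ := by linarith
  have hB : ‖s-1‖ * (2-ε) ≤ t := by
    have h := mul_le_mul_of_nonneg_left hA (norm_nonneg (s-1))
    linarith [hprod]
  have hC : ‖s-1‖ * (2-ε) ≤ ε * (2-ε) := by nlinarith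
  exact le_of_mul_le_mul_right hC h2e

/-- Floating-point complex multiplication: if
`a⊗b = {x(u+iv)(1+δ) + y(-v+iu)(1+ξ)}(1+η₀)` with `‖δ‖,‖ξ‖,‖η₀‖ ≤ 2^(-d)`
(`d ≥ 1`), then `a⊗b = ab(1+η₁)(1+η₂)(1+η₃)` with `‖ηⱼ‖ ≤ 2^(-d)`, and in
particular `‖a⊗b − ab‖ ≤ ‖ab‖((1+2^(-d))³ − 1)`. -/
theorem stmt7 (d : ℕ) (hd : 1 ≤ d) (x y u v : ℝ) (δ ξ η₀ : ℂ)
    (hδ : ‖δ‖ ≤ (2:ℝ) ^ (-(d:ℤ))) (hξ : ‖ξ‖ ≤ (2:ℝ) ^ (-(d:ℤ)))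
    (hη₀ : ‖η₀‖ ≤ (2:ℝ) ^ (-(d:ℤ)))
    (a b P : ℂ) (ha : a = (x : ℂ) + (y : ℂ) * Complex.I)
    (hb : b = (u : ℂ) + (v : ℂ) * Complex.I)
    (hP : P = ((x : ℂ) * ((u : ℂ) + (v : ℂ) * Complex.I) * (1 + δ)
        + (y : ℂ) * (-(v : ℂ) + (u : ℂ) * Complex.I) * (1 + ξ)) * (1 + η₀)) :
    (∃ η₁ η₂ η₃ : ℂ, ‖η₁‖ ≤ (2:ℝ) ^ (-(d:ℤ)) ∧ ‖η₂‖ ≤ (2:ℝ) ^ (-(d:ℤ)) ∧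
        ‖η₃‖ ≤ (2:ℝ) ^ (-(d:ℤ)) ∧ P = a * b * (1 + η₁) * (1 + η₂) * (1 + η₃)) ∧
    ‖P - a * b‖ ≤ ‖a * b‖ * ((1 + (2:ℝ) ^ (-(d:ℤ))) ^ 3 - 1) := by
  set ε : ℝ := (2:ℝ) ^ (-(d:ℤ)) with hεdef
  have hε0 : 0 < ε := by positivity
  have hεle : ε ≤ 1/2 := by
    rw [hεdef]
    calc ((2:ℝ)) ^ (-(d:ℤ)) ≤ (2:ℝ) ^ (-(1:ℤ)) :=
          zpow_le_zpow_right₀ (by norm_num) (by omega)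
      _ = 1/2 := by norm_num
  -- first part: existence
  have main : ∃ η₁ η₂ η₃ : ℂ, ‖η₁‖ ≤ ε ∧ ‖η₂‖ ≤ ε ∧ ‖η₃‖ ≤ ε ∧
      P = a * b * (1 + η₁) * (1 + η₂) * (1 + η₃) := by
    by_cases hab : a * b = 0
    · have hP0 : P = 0 := by
        rcases mul_eq_zero.mp hab with h | h
        · have hx : x = 0 ∧ y = 0 := by
            rw [ha] at h
            constructor
            · simpa using congrArg Complex.re h
            · simpa using congrArg Complex.im h
          rw [hP, hx.1, hx.2]; simp
        · have hu : u = 0 ∧ v = 0 := by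
            rw [hb] at h
            constructor
            · simpa using congrArg Complex.re h
            · simpa using congrArg Complex.im h
          rw [hP, hu.1, hu.2]; simp
      exact ⟨0, 0, 0, by simp [hε0.le], by simp [hε0.le], by simp [hε0.le],
        by simp [hP0, hab]⟩
    · have ha0 : a ≠ 0 := fun h => hab (by simp [h])
      have hb0 : b ≠ 0 := fun h => hab (by simp [h])
      have hbnorm : ‖(u:ℂ) + (v:ℂ) * Complex.I‖ = ‖b‖ := by rw [hb]
      have hbnorm2 : ‖-(v:ℂ) + (u:ℂ) * Complex.I‖ = ‖b‖ := by
        rw [hb,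
          show -(v:ℂ) + (u:ℂ)*Complex.I = ((-v : ℝ):ℂ) + ((u:ℝ):ℂ)*Complex.I by
            push_cast; ring,
          Complex.norm_add_mul_I, Complex.norm_add_mul_I]
        ring_nf
      have hanorm : |x| + |y| ≤ Real.sqrt 2 * ‖a‖ := by
        have h1 : ‖a‖ = Real.sqrt (x^2 + y^2) := by
          rw [ha, Complex.norm_add_mul_I]
        rw [h1, ← Real.sqrt_mul_self (by positivity : (0:ℝ) ≤ |x| + |y|),
          ← Real.sqrt_mul (by norm_num)]
        apply Real.sqrt_le_sqrt
        have := sq_abs x; have := sq_abs y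
        nlinarith [sq_nonneg (|x| - |y|), abs_nonneg x, abs_nonneg y]
      have hnum : ‖(x:ℂ) * ((u:ℂ) + (v:ℂ) * Complex.I) * δ
          + (y:ℂ) * (-(v:ℂ) + (u:ℂ) * Complex.I) * ξ‖
          ≤ Real.sqrt 2 * ε * (‖a‖ * ‖b‖) := by
        calc ‖(x:ℂ) * ((u:ℂ) + (v:ℂ) * Complex.I) * δ
            + (y:ℂ) * (-(v:ℂ) + (u:ℂ) * Complex.I) * ξ‖
            ≤ ‖(x:ℂ) * ((u:ℂ) + (v:ℂ) * Complex.I) * δ‖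
            + ‖(y:ℂ) * (-(v:ℂ) + (u:ℂ) * Complex.I) * ξ‖ := norm_add_le _ _
          _ = |x| * ‖b‖ * ‖δ‖ + |y| * ‖b‖ * ‖ξ‖ := by
            rw [norm_mul, norm_mul, norm_mul, norm_mul, hbnorm, hbnorm2,
              Complex.norm_real, Complex.norm_real, Real.norm_eq_abs,
              Real.norm_eq_abs]
          _ ≤ |x| * ‖b‖ * ε + |y| * ‖b‖ * ε := by
            have hx := abs_nonneg x; have hy := abs_nonneg y
            have hbn := norm_nonneg b
            gcongr
          _ = (|x| + |y|) * ‖b‖ * ε := by ring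
          _ ≤ Real.sqrt 2 * ‖a‖ * ‖b‖ * ε :=
            mul_le_mul_of_nonneg_right
              (mul_le_mul_of_nonneg_right hanorm (norm_nonneg b)) hε0.le
          _ = Real.sqrt 2 * ε * (‖a‖ * ‖b‖) := by ring
      have habeq : a * b = (x:ℂ) * ((u:ℂ) + (v:ℂ) * Complex.I)
          + (y:ℂ) * (-(v:ℂ) + (u:ℂ) * Complex.I) := by
        rw [ha, hb]; linear_combination (y:ℂ) * (v:ℂ) * Complex.I_sq
      obtain ⟨lam, hlameq, hlamnorm⟩ : ∃ lam : ℂ,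
          a * b * lam = (x:ℂ) * ((u:ℂ) + (v:ℂ) * Complex.I) * δ
            + (y:ℂ) * (-(v:ℂ) + (u:ℂ) * Complex.I) * ξ
          ∧ ‖lam‖ ≤ Real.sqrt 2 * ε := by
        refine ⟨((x:ℂ) * ((u:ℂ) + (v:ℂ) * Complex.I) * δ
            + (y:ℂ) * (-(v:ℂ) + (u:ℂ) * Complex.I) * ξ) / (a * b),
          by field_simp, ?_⟩
        rw [norm_div, norm_mul,
          div_le_iff₀ (mul_pos (norm_pos_iff.mpr ha0) (norm_pos_iff.mpr hb0))]
        exact hnum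
      obtain ⟨μ, hμnorm, hμsq⟩ := sqrt_pert lam ε hε0 hεle hlamnorm
      refine ⟨μ, μ, η₀, hμnorm, hμnorm, hη₀, ?_⟩
      rw [hP]
      linear_combination (-(1+η₀)) * habeq - (1+η₀) * hlameq
        - (a * b * (1+η₀)) * hμsq
  constructor
  · exact main
  · obtain ⟨η₁, η₂, η₃, h1, h2, h3, hPe⟩ := main
    have hdiff : P - a * b = a * b * ((1+η₁)*(1+η₂)*(1+η₃) - 1) := by
      rw [hPe]; ring
    rw [hdiff, norm_mul]
    apply mul_le_mul_of_nonneg_left _ (norm_nonneg (a*b))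
    have hexp : (1+η₁)*(1+η₂)*(1+η₃) - 1
        = η₁ + η₂ + η₃ + (η₁*η₂ + η₁*η₃ + η₂*η₃) + η₁*η₂*η₃ := by ring
    rw [hexp]
    calc ‖η₁ + η₂ + η₃ + (η₁*η₂ + η₁*η₃ + η₂*η₃) + η₁*η₂*η₃‖
        ≤ ‖η₁‖ + ‖η₂‖ + ‖η₃‖ + (‖η₁‖*‖η₂‖ + ‖η₁‖*‖η₃‖ + ‖η₂‖*‖η₃‖)
          + ‖η₁‖*‖η₂‖*‖η₃‖ := by
          have t1 := norm_add_le (η₁ + η₂ + η₃ + (η₁*η₂ + η₁*η₃ + η₂*η₃)) (η₁*η₂*η₃)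
          have t2 := norm_add_le (η₁ + η₂ + η₃) (η₁*η₂ + η₁*η₃ + η₂*η₃)
          have t3 := norm_add_le (η₁ + η₂) η₃
          have t4 := norm_add_le η₁ η₂
          have t5 := norm_add_le (η₁*η₂ + η₁*η₃) (η₂*η₃)
          have t6 := norm_add_le (η₁*η₂) (η₁*η₃)
          simp only [norm_mul] at *
          linarith
      _ ≤ (1 + ε)^3 - 1 := by
          have n1 := norm_nonneg η₁; have n2 := norm_nonneg η₂
          have n3 := norm_nonneg η₃
          nlinarith [mul_le_mul h1 h2 n2 hε0.le, mul_le_mul h1 h3 n3 hε0.le,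
            mul_le_mul h2 h3 n3 hε0.le]
end

section
/- If λ is a complex number with |λ| ≤ 2^{-1/2}, and μ is defined by the binomial series μ = Σ_{n≥1} C(1/2,n) λⁿ (so that (1+μ)² = 1+λ), then |μ| ≤ |λ|·Σ_{n≥1} |C(1/2,n)| 2^{-(n-1)/2}, and if moreover |λ| ≤ √2·2^{-d} then |μ| ≤ 2^{-d}. -/
/-- The generalized binomial coefficient `C(1/2, n)`. -/
noncomputable def halfChoose (n : ℕ) : ℝ :=
  (∏ i ∈ Finset.range n, ((1:ℝ)/2 - (i : ℝ))) / (n.factorial : ℝ)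

set_option maxHeartbeats 1000000

lemma halfChoose_succ (n : ℕ) :
    halfChoose (n+1) = halfChoose n * ((1/2 - (n:ℝ)) / ((n:ℝ)+1)) := by
  unfold halfChoose
  rw [Finset.prod_range_succ, div_mul_div_comm]
  congr 1
  rw [Nat.factorial_succ]
  push_cast
  ring

lemma abs_halfChoose_succ_le (n : ℕ) : |halfChoose (n+1)| ≤ |halfChoose n| := by
  rw [halfChoose_succ, abs_mul]
  have h1 : |(1/2 - (n:ℝ)) / ((n:ℝ)+1)| ≤ 1 := by
    rw [abs_div, abs_of_pos (by positivity : (0:ℝ) < (n:ℝ)+1)]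
    rw [div_le_one (by positivity)]
    rw [abs_le]
    constructor <;> nlinarith [Nat.cast_nonneg (α := ℝ) n]
  calc |halfChoose n| * |(1/2 - (n:ℝ)) / ((n:ℝ)+1)| ≤ |halfChoose n| * 1 :=
        mul_le_mul_of_nonneg_left h1 (abs_nonneg _)
    _ = |halfChoose n| := mul_one _

lemma abs_halfChoose_anti : ∀ {m n : ℕ}, m ≤ n → |halfChoose n| ≤ |halfChoose m| := by
  intro m n h
  induction n with
  | zero => simp_all
  | succ k ih =>
    rcases Nat.lt_or_ge m (k+1) with h' | h'
    · exact (abs_halfChoose_succ_le k).trans (ih (Nat.lt_succ_iff.mp h'))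
    · have : m = k+1 := le_antisymm h h'
      simp [this]

lemma abs_halfChoose_le_one (n : ℕ) : |halfChoose n| ≤ 1 := by
  have := abs_halfChoose_anti (Nat.zero_le n)
  simpa [halfChoose] using this

lemma abs_halfChoose_le_eighth (n : ℕ) : |halfChoose (n+2)| ≤ 1/8 := by
  have := abs_halfChoose_anti (show 2 ≤ n+2 by omega)
  have h2 : |halfChoose 2| = 1/8 := by
    norm_num [halfChoose, Finset.prod_range_succ]
  linarith
noncomputable def q : ℝ := (2:ℝ) ^ (-(1:ℝ)/2)

lemma q_pos : 0 < q := Real.rpow_pos_of_pos (by norm_num) _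
lemma q_lt_one : q < 1 :=
  Real.rpow_lt_one_of_one_lt_of_neg (by norm_num) (by norm_num)

lemma two_rpow_eq (n : ℕ) : (2:ℝ) ^ (-(n:ℝ)/2) = q ^ n := by
  unfold q
  rw [← Real.rpow_natCast ((2:ℝ) ^ (-(1:ℝ)/2)) n, ← Real.rpow_mul (by norm_num)]
  congr 1
  ring

lemma sqrt_mul_q : Real.sqrt 2 * q = 1 := by
  rw [show Real.sqrt 2 = (2:ℝ) ^ ((1:ℝ)/2) from Real.sqrt_eq_rpow 2]
  unfold q
  rw [← Real.rpow_add (by norm_num)]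
  norm_num

lemma hsummable : Summable (fun n : ℕ => |halfChoose (n+1)| * q ^ n) := by
  apply Summable.of_nonneg_of_le
    (fun n => mul_nonneg (abs_nonneg _) (pow_nonneg q_pos.le n))
    (fun n => ?_) (summable_geometric_of_lt_one q_pos.le q_lt_one)
  calc |halfChoose (n+1)| * q ^ n ≤ 1 * q ^ n :=
        mul_le_mul_of_nonneg_right (abs_halfChoose_le_one _) (pow_nonneg q_pos.le n)
    _ = q ^ n := one_mul _

lemma key : Real.sqrt 2 * (∑' n : ℕ, |halfChoose (n+1)| * q ^ n) ≤ 1 := by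
  have hsplit := Summable.sum_add_tsum_nat_add' (f := fun n : ℕ => |halfChoose (n+1)| * q ^ n)
    (k := 7) ((summable_nat_add_iff 7).mpr hsummable)
  -- tail bound
  have htail : (∑' k : ℕ, |halfChoose (k+7+1)| * q ^ (k+7)) ≤ (1/8) * q^7 * (1-q)⁻¹ := by
    have hg : Summable (fun k : ℕ => (1/8) * q^7 * q ^ k) :=
      (summable_geometric_of_lt_one q_pos.le q_lt_one).mul_left _
    have hle : ∀ k : ℕ, |halfChoose (k+7+1)| * q ^ (k+7) ≤ (1/8) * q^7 * q ^ k := by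
      intro k
      have h1 : |halfChoose (k+6+2)| ≤ 1/8 := abs_halfChoose_le_eighth (k+6)
      have h2 : q ^ (k+7) = q^7 * q^k := by ring
      rw [show k+6+2 = k+7+1 by ring] at h1
      rw [h2]
      calc |halfChoose (k+7+1)| * (q^7 * q^k) ≤ (1/8) * (q^7 * q^k) := by
            exact mul_le_mul_of_nonneg_right h1
              (mul_nonneg (pow_nonneg q_pos.le 7) (pow_nonneg q_pos.le k))
        _ = (1/8) * q^7 * q^k := by ring
    calc (∑' k : ℕ, |halfChoose (k+7+1)| * q ^ (k+7))
        ≤ ∑' k : ℕ, (1/8) * q^7 * q ^ k := by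
          apply Summable.tsum_le_tsum hle _ hg
          exact (summable_nat_add_iff 7).mpr hsummable
      _ = (1/8) * q^7 * (1-q)⁻¹ := by
          rw [tsum_mul_left, tsum_geometric_of_lt_one q_pos.le q_lt_one]
  -- head computation
  have c1 : |halfChoose 1| = 1/2 := by norm_num [halfChoose, Finset.prod_range_succ, Nat.factorial]
  have c2 : |halfChoose 2| = 1/8 := by norm_num [halfChoose, Finset.prod_range_succ, Nat.factorial]
  have c3 : |halfChoose 3| = 1/16 := by norm_num [halfChoose, Finset.prod_range_succ, Nat.factorial]
  have c4 : |halfChoose 4| = 5/128 := by norm_num [halfChoose, Finset.prod_range_succ, Nat.factorial]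
  have c5 : |halfChoose 5| = 7/256 := by norm_num [halfChoose, Finset.prod_range_succ, Nat.factorial]
  have c6 : |halfChoose 6| = 21/1024 := by norm_num [halfChoose, Finset.prod_range_succ, Nat.factorial]
  have c7 : |halfChoose 7| = 33/2048 := by norm_num [halfChoose, Finset.prod_range_succ, Nat.factorial]
  have hhead : (∑ i ∈ Finset.range 7, |halfChoose (i+1)| * q ^ i) =
      1/2 + (1/8)*q + (1/16)*q^2 + (5/128)*q^3 + (7/256)*q^4 + (21/1024)*q^5 + (33/2048)*q^6 := by
    simp [Finset.sum_range_succ, c1, c2, c3, c4, c5, c6, c7]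
  -- q facts
  set s := Real.sqrt 2 with hs_def
  have hs2 : s^2 = 2 := Real.sq_sqrt (by norm_num)
  have hs0 : 0 ≤ s := Real.sqrt_nonneg 2
  have hsub : s ≤ 1.415 := by nlinarith
  have hslb : 1.414 ≤ s := by nlinarith
  have hq : 2 * q = s := by
    have := sqrt_mul_q
    nlinarith [q_pos]
  have hqle : q ≤ 3/4 := by nlinarith
  have hinv : (1-q)⁻¹ ≤ 4 := by
    rw [inv_le_comm₀ (by linarith [q_lt_one]) (by norm_num)]
    linarith
  have htail' : (1/8) * q^7 * (1-q)⁻¹ ≤ (1/2) * q^7 := by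
    nlinarith [pow_pos q_pos 7]
  -- combine
  rw [← hsplit, hhead]
  have hq2 : q = s/2 := by linarith
  have h3 : s^3 = 2*s := by linear_combination s*hs2
  have h4 : s^4 = 4 := by linear_combination (s^2+2)*hs2
  have h5 : s^5 = 4*s := by linear_combination (s^3+2*s)*hs2
  have h6 : s^6 = 8 := by linear_combination (s^4+2*s^2+4)*hs2
  have h7 : s^7 = 8*s := by linear_combination (s^5+2*s^3+4*s)*hs2
  have hT := htail.trans htail'
  rw [hq2] at hT ⊢
  nlinarith [hT, hs2, h3, h4, h5, h6, h7, hslb, hsub]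

/-- If `‖λ‖ ≤ 2^(-1/2)` and `μ = Σ_{n≥1} C(1/2,n) λⁿ` (the binomial series
for `(1+λ)^(1/2) − 1`), then `‖μ‖ ≤ ‖λ‖·Σ_{n≥1}|C(1/2,n)|2^(-(n-1)/2)`, and
whenever `‖λ‖ ≤ √2·2^(-d)` we get `‖μ‖ ≤ 2^(-d)`. -/
theorem stmt8 (lam μ : ℂ) (hlam : ‖lam‖ ≤ (2:ℝ) ^ (-(1:ℝ)/2))
    (hμ : μ = ∑' n : ℕ, ((halfChoose (n+1) : ℝ) : ℂ) * lam ^ (n+1)) :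
    ‖μ‖ ≤ ‖lam‖ * ∑' n : ℕ, |halfChoose (n+1)| * (2:ℝ) ^ (-(n:ℝ)/2) ∧
    ∀ d : ℕ, ‖lam‖ ≤ Real.sqrt 2 * (2:ℝ) ^ (-(d:ℤ)) → ‖μ‖ ≤ (2:ℝ) ^ (-(d:ℤ)) := by
  have hq_lam : ‖lam‖ ≤ q := hlam
  have hl0 : (0:ℝ) ≤ ‖lam‖ := norm_nonneg _
  have hSconv : (∑' n : ℕ, |halfChoose (n+1)| * (2:ℝ) ^ (-(n:ℝ)/2)) =
      ∑' n : ℕ, |halfChoose (n+1)| * q ^ n := by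
    exact tsum_congr fun n => by rw [two_rpow_eq]
  -- summability of norms
  have hnorm_eq : ∀ n : ℕ, ‖((halfChoose (n+1) : ℝ) : ℂ) * lam ^ (n+1)‖ =
      |halfChoose (n+1)| * ‖lam‖ ^ (n+1) := by
    intro n
    rw [norm_mul, norm_pow, Complex.norm_real, Real.norm_eq_abs]
  have hterm_le : ∀ n : ℕ, |halfChoose (n+1)| * ‖lam‖ ^ (n+1) ≤
      ‖lam‖ * (|halfChoose (n+1)| * q ^ n) := by
    intro n
    have h1 : ‖lam‖ ^ n ≤ q ^ n := pow_le_pow_left₀ hl0 hq_lam n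
    calc |halfChoose (n+1)| * ‖lam‖ ^ (n+1)
        = ‖lam‖ * (|halfChoose (n+1)| * ‖lam‖ ^ n) := by ring
      _ ≤ ‖lam‖ * (|halfChoose (n+1)| * q ^ n) := by
          apply mul_le_mul_of_nonneg_left _ hl0
          exact mul_le_mul_of_nonneg_left h1 (abs_nonneg _)
  have hg : Summable (fun n : ℕ => ‖lam‖ * (|halfChoose (n+1)| * q ^ n)) :=
    hsummable.mul_left _
  have hnsum : Summable (fun n : ℕ => ‖((halfChoose (n+1) : ℝ) : ℂ) * lam ^ (n+1)‖) := by
    apply Summable.of_nonneg_of_le (fun n => norm_nonneg _) (fun n => ?_) hg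
    rw [hnorm_eq n]; exact hterm_le n
  have hmain : ‖μ‖ ≤ ‖lam‖ * ∑' n : ℕ, |halfChoose (n+1)| * q ^ n := by
    rw [hμ]
    calc ‖∑' n : ℕ, ((halfChoose (n+1) : ℝ) : ℂ) * lam ^ (n+1)‖
        ≤ ∑' n : ℕ, ‖((halfChoose (n+1) : ℝ) : ℂ) * lam ^ (n+1)‖ :=
          norm_tsum_le_tsum_norm hnsum
      _ ≤ ∑' n : ℕ, ‖lam‖ * (|halfChoose (n+1)| * q ^ n) := by
          apply Summable.tsum_le_tsum _ hnsum hg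
          intro n; rw [hnorm_eq n]; exact hterm_le n
      _ = ‖lam‖ * ∑' n : ℕ, |halfChoose (n+1)| * q ^ n := tsum_mul_left
  constructor
  · rw [hSconv]; exact hmain
  · intro d hd
    set S := ∑' n : ℕ, |halfChoose (n+1)| * q ^ n with hS
    have hS0 : 0 ≤ S :=
      tsum_nonneg fun n => mul_nonneg (abs_nonneg _) (pow_nonneg q_pos.le n)
    have hpow : (0:ℝ) < (2:ℝ) ^ (-(d:ℤ)) := by positivity
    calc ‖μ‖ ≤ ‖lam‖ * S := hmain
      _ ≤ (Real.sqrt 2 * (2:ℝ) ^ (-(d:ℤ))) * S := mul_le_mul_of_nonneg_right hd hS0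
      _ = (2:ℝ) ^ (-(d:ℤ)) * (Real.sqrt 2 * S) := by ring
      _ ≤ (2:ℝ) ^ (-(d:ℤ)) * 1 := mul_le_mul_of_nonneg_left key hpow.le
      _ = (2:ℝ) ^ (-(d:ℤ)) := mul_one _
end

section
/- For every nonnegative integer n, Σ_{j=0}^{n} (n-j+4) · (4/π)·2^{2j} · (1/(2n-2j)!)·(π/2)^{2n-2j} < 2^{2n}·( (16/π)cosh(π/4) + (1/2)sinh(π/4) ) < 7.2·2^{2n}. -/
open Real Finset

lemma hasSum_exp_real (x : ℝ) : HasSum (fun n => x ^ n / n.factorial) (Real.exp x) := by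
  rw [Real.exp_eq_exp_ℝ]
  exact NormedSpace.expSeries_div_hasSum_exp x

lemma hasSum_cosh_real (x : ℝ) :
    HasSum (fun k : ℕ => x ^ (2 * k) / (2 * k).factorial) (Real.cosh x) := by
  have h3 := (hasSum_exp_real x).add (hasSum_exp_real (-x))
  have hinj : Function.Injective (fun k : ℕ => 2 * k) := fun a b h => by
    simp only at h; omega
  have hvan : ∀ m ∉ Set.range (fun k : ℕ => 2 * k),
      x ^ m / (m.factorial : ℝ) + (-x) ^ m / m.factorial = 0 := by
    intro m hm
    have hodd : Odd m := by
      rcases Nat.even_or_odd m with he | ho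
      · obtain ⟨r, hr⟩ := he
        exact absurd ⟨r, by simp only []; omega⟩ hm
      · exact ho
    rw [hodd.neg_pow]
    ring
  have h4 := (Function.Injective.hasSum_iff hinj hvan).mpr h3
  have h5 : HasSum (fun k : ℕ => (x ^ (2 * k) / (2 * k).factorial +
      (-x) ^ (2 * k) / (2 * k).factorial) / 2) ((Real.exp x + Real.exp (-x)) / 2) :=
    h4.div_const 2
  rw [Real.cosh_eq]
  refine h5.congr_fun fun k => ?_
  have : (-x) ^ (2 * k) = x ^ (2 * k) := (Even.neg_pow ⟨k, by ring⟩ x)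
  rw [this]; ring

lemma hasSum_sinh_real (x : ℝ) :
    HasSum (fun k : ℕ => x ^ (2 * k + 1) / (2 * k + 1).factorial) (Real.sinh x) := by
  have h3 := (hasSum_exp_real x).sub (hasSum_exp_real (-x))
  have hinj : Function.Injective (fun k : ℕ => 2 * k + 1) := fun a b h => by
    simp only at h; omega
  have hvan : ∀ m ∉ Set.range (fun k : ℕ => 2 * k + 1),
      x ^ m / (m.factorial : ℝ) - (-x) ^ m / m.factorial = 0 := by
    intro m hm
    have heven : Even m := by
      rcases Nat.even_or_odd m with he | ho
      · exact he
      · obtain ⟨r, hr⟩ := ho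
        exact absurd ⟨r, by simp only []; omega⟩ hm
    rw [heven.neg_pow]
    ring
  have h4 := (Function.Injective.hasSum_iff hinj hvan).mpr h3
  have h5 : HasSum (fun k : ℕ => (x ^ (2 * k + 1) / (2 * k + 1).factorial -
      (-x) ^ (2 * k + 1) / (2 * k + 1).factorial) / 2) ((Real.exp x - Real.exp (-x)) / 2) :=
    h4.div_const 2
  rw [Real.sinh_eq]
  refine h5.congr_fun fun k => ?_
  have : (-x) ^ (2 * k + 1) = -x ^ (2 * k + 1) := Odd.neg_pow ⟨k, by ring⟩ x
  rw [this]; ring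

lemma hasSum_weighted (x : ℝ) :
    HasSum (fun k : ℕ => ((k : ℝ) + 4) * x ^ (2 * k) / (2 * k).factorial)
      (4 * Real.cosh x + x / 2 * Real.sinh x) := by
  have hc := (hasSum_cosh_real x).mul_left 4
  have hs := (hasSum_sinh_real x).mul_left (x / 2)
  set g : ℕ → ℝ := fun k => (k : ℝ) * x ^ (2 * k) / (2 * k).factorial with hgdef
  have h1 : HasSum (fun k : ℕ => g (k + 1)) (x / 2 * Real.sinh x) := by
    refine hs.congr_fun fun k => ?_
    simp only [hgdef]
    have hfac : ((2 * (k + 1)).factorial : ℝ) = (2 * k + 2) * (2 * k + 1).factorial := by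
      have : 2 * (k + 1) = (2 * k + 1) + 1 := by ring
      rw [this, Nat.factorial_succ]
      push_cast
      ring
    have hpow : x ^ (2 * (k + 1)) = x * x ^ (2 * k + 1) := by
      rw [← pow_succ']
      ring_nf
    rw [hfac, hpow]
    have hfacpos : (0 : ℝ) < (2 * k + 1).factorial := by positivity
    push_cast
    field_simp
  have hg : HasSum g (x / 2 * Real.sinh x) := by
    have := (hasSum_nat_add_iff (f := g) 1).mp h1
    simpa [hgdef] using this
  have := hg.add hc
  have h2 : x / 2 * Real.sinh x + 4 * Real.cosh x
      = 4 * Real.cosh x + x / 2 * Real.sinh x := by ring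
  rw [h2] at this
  refine this.congr_fun fun k => ?_
  simp only [hgdef]
  ring

lemma exp_pi_div_four_lt : Real.exp (Real.pi / 4) < 2.19332 := by
  have h1 : Real.pi / 4 < 0.7854 := by
    have := Real.pi_lt_d2
    have h := Real.pi_lt_d6
    nlinarith
  have h2 : Real.exp (Real.pi / 4) < Real.exp 0.7854 := Real.exp_lt_exp.mpr h1
  have h3 : Real.exp 0.7854 ≤ (∑ m ∈ Finset.range 6, (0.7854 : ℝ) ^ m / m.factorial) +
      (0.7854 : ℝ) ^ 6 * (6 + 1) / (Nat.factorial 6 * 6) :=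
    Real.exp_bound' (by norm_num) (by norm_num) (by norm_num)
  have h4 : (∑ m ∈ Finset.range 6, (0.7854 : ℝ) ^ m / m.factorial) +
      (0.7854 : ℝ) ^ 6 * (6 + 1) / (Nat.factorial 6 * 6) < 2.19332 := by
    simp only [Finset.sum_range_succ, Finset.sum_range_zero, Nat.factorial]
    norm_num
  linarith

lemma exp_pi_div_four_gt : (2.19253 : ℝ) < Real.exp (Real.pi / 4) := by
  have h1 : (0.785398 : ℝ) < Real.pi / 4 := by
    have := Real.pi_gt_d6
    nlinarith
  have h2 : Real.exp 0.785398 < Real.exp (Real.pi / 4) := Real.exp_lt_exp.mpr h1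
  have h3 := Real.exp_bound (x := (0.785398 : ℝ)) (by rw [abs_of_pos] <;> norm_num)
    (n := 6) (by norm_num)
  have h4 : Real.exp 0.785398 ≥ (∑ m ∈ Finset.range 6, (0.785398 : ℝ) ^ m / m.factorial) -
      |(0.785398 : ℝ)| ^ 6 * ((6 : ℕ).succ / ((Nat.factorial 6 : ℝ) * 6)) := by
    have := abs_sub_le_iff.mp h3
    linarith [this.2]
  have h5 : (∑ m ∈ Finset.range 6, (0.785398 : ℝ) ^ m / m.factorial) -
      |(0.785398 : ℝ)| ^ 6 * ((6 : ℕ).succ / ((Nat.factorial 6 : ℝ) * 6)) > 2.19253 := by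
    rw [abs_of_pos (by norm_num)]
    simp only [Finset.sum_range_succ, Finset.sum_range_zero, Nat.factorial, Nat.succ_eq_add_one]
    norm_num
  linarith

lemma numeric_bound : (16 / Real.pi) * Real.cosh (Real.pi / 4)
    + (1 / 2) * Real.sinh (Real.pi / 4) < 7.2 := by
  have hU := exp_pi_div_four_lt
  have hL := exp_pi_div_four_gt
  have hE : (0 : ℝ) < Real.exp (Real.pi / 4) := Real.exp_pos _
  set E := Real.exp (Real.pi / 4) with hEdef
  have hEinv : (0 : ℝ) < E⁻¹ := inv_pos.mpr hE
  have hmul : E * E⁻¹ = 1 := mul_inv_cancel₀ (ne_of_gt hE)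
  have hcosh : Real.cosh (Real.pi / 4) = (E + E⁻¹) / 2 := by
    rw [Real.cosh_eq, Real.exp_neg]
  have hsinh : Real.sinh (Real.pi / 4) = (E - E⁻¹) / 2 := by
    rw [Real.sinh_eq, Real.exp_neg]
  have hp1 : (2.19253 : ℝ) * E⁻¹ < 1 := by
    have := mul_lt_mul_of_pos_right hL hEinv
    linarith
  have hp2 : (1 : ℝ) < 2.19332 * E⁻¹ := by
    have := mul_lt_mul_of_pos_right hU hEinv
    linarith
  have hinv_lt : E⁻¹ < 0.45610 := by linarith
  have hinv_gt : (0.45592 : ℝ) < E⁻¹ := by linarith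
  have hcosh_lt : Real.cosh (Real.pi / 4) < 1.3248 := by
    rw [hcosh]; linarith
  have hsinh_lt : Real.sinh (Real.pi / 4) < 0.8688 := by
    rw [hsinh]; linarith
  have hpi : (3.141592 : ℝ) < Real.pi := Real.pi_gt_d6
  have hpipos : (0 : ℝ) < Real.pi := Real.pi_pos
  have h16 : 16 / Real.pi < 16 / 3.141592 :=
    div_lt_div_of_pos_left (by norm_num) (by norm_num) hpi
  have h16pos : (0 : ℝ) < 16 / Real.pi := by positivity
  have hcoshpos : 0 < Real.cosh (Real.pi / 4) := Real.cosh_pos _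
  have h1 : (16 / Real.pi) * Real.cosh (Real.pi / 4) < (16 / 3.141592) * 1.3248 := by
    nlinarith
  have hfin : (16 / 3.141592 : ℝ) * 1.3248 + (1 / 2) * 0.8688 < 7.2 := by norm_num
  have hsinhpos : 0 < Real.sinh (Real.pi / 4) := by
    rw [hsinh]; linarith
  nlinarith

/-- Weighted convolution bound:
`Σ_{j=0}^n (n-j+4)(4/π)2^{2j}(π/2)^{2n-2j}/(2n-2j)!
  < 2^{2n}((16/π)cosh(π/4) + (1/2)sinh(π/4)) < 7.2·2^{2n}`. -/
theorem stmt14 (n : ℕ) :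
    ∑ j ∈ Finset.range (n + 1),
        ((n - j + 4 : ℕ) : ℝ) * (4 / Real.pi) * 2 ^ (2 * j)
          * (1 / ((2 * n - 2 * j).factorial : ℝ)) * (Real.pi / 2) ^ (2 * n - 2 * j)
      < 2 ^ (2 * n) * ((16 / Real.pi) * Real.cosh (Real.pi / 4)
          + (1/2) * Real.sinh (Real.pi / 4)) ∧
    2 ^ (2 * n) * ((16 / Real.pi) * Real.cosh (Real.pi / 4)
          + (1/2) * Real.sinh (Real.pi / 4))
      < 7.2 * 2 ^ (2 * n) := by
  have hpipos : (0 : ℝ) < Real.pi := Real.pi_pos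
  have hpne : Real.pi ≠ 0 := ne_of_gt hpipos
  constructor
  · -- reindex j ↦ n - j
    set f : ℕ → ℝ := fun k => ((k : ℝ) + 4) * (Real.pi / 4) ^ (2 * k) / (2 * k).factorial
      with hfdef
    have hreflect :
        ∑ j ∈ Finset.range (n + 1),
          ((n - j + 4 : ℕ) : ℝ) * (4 / Real.pi) * 2 ^ (2 * j)
            * (1 / ((2 * n - 2 * j).factorial : ℝ)) * (Real.pi / 2) ^ (2 * n - 2 * j)
        = 2 ^ (2 * n) * (4 / Real.pi) * ∑ k ∈ Finset.range (n + 1), f k := by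
      rw [← Finset.sum_range_reflect]
      rw [Finset.mul_sum]
      refine Finset.sum_congr rfl fun k hk => ?_
      have hkn : k ≤ n := by
        have := Finset.mem_range.mp hk; omega
      have e1 : n + 1 - 1 - k = n - k := by omega
      have e2 : n - (n - k) + 4 = k + 4 := by omega
      have e3 : 2 * n - 2 * (n - k) = 2 * k := by omega
      rw [e1, e2, e3]
      have e4 : (2 : ℝ) ^ (2 * (n - k)) * (Real.pi / 2) ^ (2 * k)
          = 2 ^ (2 * n) * (Real.pi / 4) ^ (2 * k) := by
        have e5 : (2 : ℝ) ^ (2 * n) = 2 ^ (2 * (n - k)) * 2 ^ (2 * k) := by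
          rw [← pow_add]
          congr 1
          omega
        rw [e5, mul_assoc, ← mul_pow]
        congr 2
        ring
      simp only [hfdef]
      push_cast
      linear_combination (((k : ℝ) + 4) * (4 / Real.pi)
        * (1 / (((2 * k).factorial : ℕ) : ℝ))) * e4
    rw [hreflect]
    have hsum := hasSum_weighted (Real.pi / 4)
    have hsummable : Summable f := hsum.summable
    have hpartial : ∑ k ∈ Finset.range (n + 1), f k
        < 4 * Real.cosh (Real.pi / 4) + Real.pi / 4 / 2 * Real.sinh (Real.pi / 4) := by
      have hnonneg : ∀ k, 0 ≤ f k := by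
        intro k
        simp only [hfdef]
        positivity
      have hstep : ∑ k ∈ Finset.range (n + 1), f k < ∑ k ∈ Finset.range (n + 2), f k := by
        have hpos1 : 0 < f (n + 1) := by
          simp only [hfdef]
          positivity
        calc ∑ k ∈ Finset.range (n + 1), f k
            < ∑ k ∈ Finset.range (n + 1), f k + f (n + 1) := by linarith
          _ = ∑ k ∈ Finset.range (n + 2), f k := (Finset.sum_range_succ f (n + 1)).symm
      have hle : ∑ k ∈ Finset.range (n + 2), f k ≤
          4 * Real.cosh (Real.pi / 4) + Real.pi / 4 / 2 * Real.sinh (Real.pi / 4) := by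
        rw [← hsum.tsum_eq]
        exact Summable.sum_le_tsum _ (fun k _ => hnonneg k) hsummable
      linarith
    have hpos : (0 : ℝ) < 2 ^ (2 * n) * (4 / Real.pi) := by positivity
    have := mul_lt_mul_of_pos_left hpartial hpos
    calc 2 ^ (2 * n) * (4 / Real.pi) * ∑ k ∈ Finset.range (n + 1), f k
        < 2 ^ (2 * n) * (4 / Real.pi) *
          (4 * Real.cosh (Real.pi / 4) + Real.pi / 4 / 2 * Real.sinh (Real.pi / 4)) := this
      _ = 2 ^ (2 * n) * ((16 / Real.pi) * Real.cosh (Real.pi / 4)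
          + (1/2) * Real.sinh (Real.pi / 4)) := by
          field_simp
          ring
  · have h := numeric_bound
    have hpow : (0 : ℝ) < 2 ^ (2 * n) := by positivity
    nlinarith
end
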